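/- Let V₁, V₂ be finite-dimensional real vector spaces, ρ₁ : SO(3) → GL(V₁) and ρ₂ : SO(3) → GL(V₂) group homomorphisms, μ a Borel measure on S² invariant under the SO(3) action, x₀ ∈ S² a fixed reference point, and c : S² → SO(3) a (measurable) section with c(x)·x₀ = x for all x ∈ S². Let κ : S² → Hom(V₁,V₂) be continuous and satisfy the kernel constraint κ(Q·y) = ρ₂(Q) κ(y) ρ₁(Q)⁻¹ for all y ∈ S² and all Q ∈ SO(3) with Q·x₀ = x₀, and let f : S² → V₁ be continuous. Define [κ ⋆ f](y) = ∫_{S²} ρ₂(c(x)) κ(c(x)⁻¹·y) ρ₁(c(x))⁻¹ f(x) dμ(x). Then for every S ∈ SO(3) and every y ∈ S², [κ ⋆ (π₁(S)f)](y) = ρ₂(S)·[κ ⋆ f](S⁻¹·y), where [π₁(S)f](x) = ρ₁(S) f(S⁻¹·x). -/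

import Mathlib

open Matrix MeasureTheory

noncomputable section

/-- `SO(n)`: the group of `n×n` real orthogonal matrices with determinant `1`, as a subgroup
of the orthogonal group. -/
def SO (n : ℕ) : Subgroup (Matrix.orthogonalGroup (Fin n) ℝ) where
  carrier := {R | (R : Matrix (Fin n) (Fin n) ℝ).det = 1}
  one_mem' := by simp
  mul_mem' := by
    intro a b ha hb
    simp only [Set.mem_setOf_eq, Matrix.UnitaryGroup.mul_val, Matrix.det_mul] at *
    rw [ha, hb, mul_one]
  inv_mem' := by
    intro a ha
    simp only [Set.mem_setOf_eq, Matrix.UnitaryGroup.inv_val] at *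
    rw [Matrix.star_eq_conjTranspose, Matrix.conjTranspose_eq_transpose_of_trivial,
      Matrix.det_transpose]
    exact ha

/-- The matrix underlying an element of `SO(n)`. -/
def SO.mat {n : ℕ} (R : SO n) : Matrix (Fin n) (Fin n) ℝ := R.1.1

/-- The unit sphere `S²` in three-dimensional Euclidean space. -/
abbrev Sphere2 : Type := Metric.sphere (0 : EuclideanSpace ℝ (Fin 3)) 1

theorem norm_mulVec (R : SO 3) (x : EuclideanSpace ℝ (Fin 3)) :
    ‖(show EuclideanSpace ℝ (Fin 3) from WithLp.toLp 2 ((SO.mat R).mulVec x))‖ = ‖x‖ := by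
  have horth : star (SO.mat R) * SO.mat R = 1 := R.1.2.1
  have h : (SO.mat R)ᵀ * SO.mat R = 1 := by
    rwa [Matrix.star_eq_conjTranspose, Matrix.conjTranspose_eq_transpose_of_trivial] at horth
  rw [EuclideanSpace.norm_eq, EuclideanSpace.norm_eq]
  congr 1
  simp only [WithLp.ofLp_toLp]
  have hd : ∀ (w : Fin 3 → ℝ), (∑ i, ‖w i‖ ^ 2) = w ⬝ᵥ w := by
    intro w
    simp [dotProduct, Real.norm_eq_abs, sq_abs, pow_two]
  rw [hd ((SO.mat R).mulVec x), hd x]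
  rw [dotProduct_mulVec]
  congr 1
  calc ((SO.mat R).mulVec x) ᵥ* SO.mat R = (SO.mat R)ᵀ *ᵥ ((SO.mat R) *ᵥ x) := by
        rw [Matrix.mulVec_transpose]
  _ = ((SO.mat R)ᵀ * SO.mat R) *ᵥ x := by rw [Matrix.mulVec_mulVec]
  _ = x := by rw [h, Matrix.one_mulVec]

/-- The action of `SO(3)` on the unit sphere `S²` by matrix-vector multiplication. -/
def SO.act (R : SO 3) (x : Sphere2) : Sphere2 :=
  ⟨WithLp.toLp 2 ((SO.mat R).mulVec x), by
    rw [mem_sphere_zero_iff_norm]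
    exact (norm_mulVec R x).trans (mem_sphere_zero_iff_norm.mp x.2)⟩

instance : MeasurableSpace (Matrix (Fin 3) (Fin 3) ℝ) := borel _
instance : BorelSpace (Matrix (Fin 3) (Fin 3) ℝ) := ⟨rfl⟩

variable {V₁ V₂ : Type*}
  [NormedAddCommGroup V₁] [NormedSpace ℝ V₁] [FiniteDimensional ℝ V₁]
  [NormedAddCommGroup V₂] [NormedSpace ℝ V₂] [FiniteDimensional ℝ V₂]

/-- The spherical convolution with `𝒳 = 𝒴 = S²` defined using a section `c : S² → SO(3)`:
`[κ ⋆ f](y) = ∫_{S²} ρ₂(c(x)) κ(c(x)⁻¹·y) ρ₁(c(x))⁻¹ f(x) dμ(x)`. -/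
def sphereConvSec (ρ₁ : SO 3 →* LinearMap.GeneralLinearGroup ℝ V₁)
    (ρ₂ : SO 3 →* LinearMap.GeneralLinearGroup ℝ V₂) (μ : Measure Sphere2)
    (c : Sphere2 → SO 3) (κ : Sphere2 → (V₁ →ₗ[ℝ] V₂)) (f : Sphere2 → V₁)
    (y : Sphere2) : V₂ :=
  ∫ x, (ρ₂ (c x) : V₂ →ₗ[ℝ] V₂)
    (κ (SO.act (c x)⁻¹ y) ((↑(ρ₁ (c x))⁻¹ : V₁ →ₗ[ℝ] V₁) (f x))) ∂μ

-- auxiliary lemmas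

lemma SO.mat_mul (R R' : SO 3) : SO.mat (R * R') = SO.mat R * SO.mat R' := rfl

lemma SO.mat_one : SO.mat (1 : SO 3) = 1 := rfl

lemma SO.act_mul (R R' : SO 3) (x : Sphere2) :
    SO.act (R * R') x = SO.act R (SO.act R' x) := by
  apply Subtype.ext
  show WithLp.toLp 2 ((SO.mat (R * R')) *ᵥ (x : EuclideanSpace ℝ (Fin 3)).ofLp) = _
  rw [SO.mat_mul, ← Matrix.mulVec_mulVec]
  rfl

lemma SO.act_one (x : Sphere2) : SO.act (1 : SO 3) x = x := by
  apply Subtype.ext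
  show WithLp.toLp 2 ((SO.mat (1 : SO 3)) *ᵥ (x : EuclideanSpace ℝ (Fin 3)).ofLp) = _
  rw [SO.mat_one, Matrix.one_mulVec, WithLp.toLp_ofLp]

lemma SO.act_inv_act (R : SO 3) (x : Sphere2) : SO.act R⁻¹ (SO.act R x) = x := by
  rw [← SO.act_mul, inv_mul_cancel, SO.act_one]

lemma SO.act_act_inv (R : SO 3) (x : Sphere2) : SO.act R (SO.act R⁻¹ x) = x := by
  rw [← SO.act_mul, mul_inv_cancel, SO.act_one]

lemma SO.continuous_act (R : SO 3) : Continuous (SO.act R) := by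
  apply Continuous.subtype_mk
  exact (PiLp.continuous_toLp 2 _).comp ((LinearMap.continuous_of_finiteDimensional
    (Matrix.mulVecLin (SO.mat R) : (Fin 3 → ℝ) →ₗ[ℝ] (Fin 3 → ℝ))).comp
    ((PiLp.continuous_ofLp 2 _).comp continuous_subtype_val))

def SO.actEquiv (R : SO 3) : Sphere2 ≃ᵐ Sphere2 where
  toFun := SO.act R
  invFun := SO.act R⁻¹
  left_inv := SO.act_inv_act R
  right_inv := SO.act_act_inv R
  measurable_toFun := (SO.continuous_act R).measurable
  measurable_invFun := (SO.continuous_act R⁻¹).measurable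


/-- Equivariance of the spherical convolution with `𝒳 = 𝒴 = S²`: if the kernel satisfies
the kernel constraint `κ(Q·y) = ρ₂(Q) κ(y) ρ₁(Q)⁻¹` for all `Q` in the stabilizer of the
reference point `x₀`, and `c : S² → SO(3)` is a measurable section with `c(x)·x₀ = x`, then
`[κ ⋆ (π₁(S)f)](y) = ρ₂(S)·[κ ⋆ f](S⁻¹·y)`, where `[π₁(S)f](x) = ρ₁(S) f(S⁻¹·x)`. -/
theorem sphereConvSec_equivariant
    (ρ₁ : SO 3 →* LinearMap.GeneralLinearGroup ℝ V₁)
    (ρ₂ : SO 3 →* LinearMap.GeneralLinearGroup ℝ V₂)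
    (μ : Measure Sphere2) (hμ : ∀ R : SO 3, μ.map (SO.act R) = μ)
    (x₀ : Sphere2) (c : Sphere2 → SO 3) (hc : ∀ x, SO.act (c x) x₀ = x)
    (hcm : Measurable c)
    (κ : Sphere2 → (V₁ →ₗ[ℝ] V₂)) (hκ : Continuous fun x => ⇑(κ x))
    (hconstraint : ∀ Q : SO 3, SO.act Q x₀ = x₀ → ∀ y : Sphere2,
      κ (SO.act Q y) = (ρ₂ Q : V₂ →ₗ[ℝ] V₂) ∘ₗ κ y ∘ₗ (↑(ρ₁ Q)⁻¹ : V₁ →ₗ[ℝ] V₁))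
    (f : Sphere2 → V₁) (hf : Continuous f) (S : SO 3) (y : Sphere2) :
    sphereConvSec ρ₁ ρ₂ μ c κ
        (fun x => (ρ₁ S : V₁ →ₗ[ℝ] V₁) (f (SO.act S⁻¹ x))) y =
      (ρ₂ S : V₂ →ₗ[ℝ] V₂) (sphereConvSec ρ₁ ρ₂ μ c κ f (SO.act S⁻¹ y)) := by
  -- move ρ₂ S inside the integral on the RHS
  let e : V₂ ≃L[ℝ] V₂ :=
    ((LinearMap.GeneralLinearGroup.toLinearEquiv (ρ₂ S)).toContinuousLinearEquiv)
  have he : ∀ v : V₂, e v = (ρ₂ S : V₂ →ₗ[ℝ] V₂) v := fun v => rfl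
  rw [sphereConvSec, sphereConvSec, ← he, ← e.integral_comp_comm]
  -- change variables x ↦ S x on the LHS
  have hμ' : μ = Measure.map (⇑(SO.actEquiv S)) μ := (hμ S).symm
  conv_lhs => rw [hμ', MeasureTheory.integral_map_equiv]
  congr 1
  funext x
  have hx : (SO.actEquiv S) x = SO.act S x := rfl
  rw [hx]
  -- pointwise identity
  set Q : SO 3 := (c (SO.act S x))⁻¹ * S * c x with hQ
  have hQx₀ : SO.act Q x₀ = x₀ := by
    rw [hQ, SO.act_mul, SO.act_mul, hc x]
    nth_rewrite 2 [← hc (SO.act S x)]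
    exact SO.act_inv_act _ _
  have hkey := hconstraint Q hQx₀ (SO.act (c x)⁻¹ (SO.act S⁻¹ y))
  have harg : SO.act Q (SO.act (c x)⁻¹ (SO.act S⁻¹ y)) = SO.act (c (SO.act S x))⁻¹ y := by
    rw [← SO.act_mul, ← SO.act_mul]
    congr 1
    rw [hQ]; group
  rw [harg] at hkey
  rw [SO.act_inv_act S, hkey]
  simp only [LinearMap.coe_comp, Function.comp_apply, he]
  have h2 : ∀ (a b : SO 3) (v : V₂),
      (ρ₂ a : V₂ →ₗ[ℝ] V₂) ((ρ₂ b : V₂ →ₗ[ℝ] V₂) v) = (ρ₂ (a * b) : V₂ →ₗ[ℝ] V₂) v := by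
    intro a b v
    rw [_root_.map_mul]
    rfl
  have h1 : ∀ (a b : SO 3) (v : V₁),
      (ρ₁ a : V₁ →ₗ[ℝ] V₁) ((ρ₁ b : V₁ →ₗ[ℝ] V₁) v) = (ρ₁ (a * b) : V₁ →ₗ[ℝ] V₁) v := by
    intro a b v
    rw [_root_.map_mul]
    rfl
  simp only [← _root_.map_inv ρ₁, h1, h2]
  have e1 : Q⁻¹ * ((c (SO.act S x))⁻¹ * S) = (c x)⁻¹ := by rw [hQ]; group
  have e2 : c (SO.act S x) * Q = S * c x := by rw [hQ]; group
  rw [e1, e2]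

end
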